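/- arXiv:2103.13909 — 2 statements merged into one kernel-verified Lean document; each statement's English description precedes it below -/
import Mathlib

section
/- Let D : ℝⁿ → ℝⁿ be a differentiable denoiser that is locally homogeneous (J[D](x)·x = D(x)) and has symmetric Jacobian. Define ρ(x) = (1/(2ν)) xᵀ(x − D(x)) for ν > 0. Then ∇ρ(x) = (1/ν)(x − D(x)). -/
/-- RED gradient identity: for a differentiable denoiser `D` with symmetric Jacobian and
`J[D](x)x = D(x)`, the regularizer `ρ(x) = (1/(2ν))⟨x, x − D(x)⟩` has gradient
`∇ρ(x) = (1/ν)(x − D(x))`. -/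
theorem stmt10 {n : ℕ} (D : EuclideanSpace ℝ (Fin n) → EuclideanSpace ℝ (Fin n))
    (hD : Differentiable ℝ D) (ν : ℝ) (hν : 0 < ν)
    (hSym : ∀ x u v, (inner ℝ (fderiv ℝ D x u) v : ℝ) = inner ℝ u (fderiv ℝ D x v))
    (hHom : ∀ x, fderiv ℝ D x x = D x) :
    ∀ x, gradient (fun x => (1 / (2 * ν)) * (inner ℝ x (x - D x) : ℝ)) x
      = (1 / ν) • (x - D x) := by
  intro x
  have hg : HasFDerivAt (fun y : EuclideanSpace ℝ (Fin n) => y - D y)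
      (ContinuousLinearMap.id ℝ _ - fderiv ℝ D x) x :=
    (hasFDerivAt_id x).sub (hD x).hasFDerivAt
  have hinner : HasFDerivAt (fun y : EuclideanSpace ℝ (Fin n) => (inner ℝ y (y - D y) : ℝ))
      ((fderivInnerCLM ℝ (x, x - D x)).comp
        ((ContinuousLinearMap.id ℝ _).prod (ContinuousLinearMap.id ℝ _ - fderiv ℝ D x))) x :=
    (hasFDerivAt_id x).inner ℝ hg
  have hf := hinner.const_mul (1 / (2 * ν))
  have hgrad : HasGradientAt (fun y : EuclideanSpace ℝ (Fin n) =>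
      (1 / (2 * ν)) * (inner ℝ y (y - D y) : ℝ)) ((1 / ν) • (x - D x)) x := by
    rw [hasGradientAt_iff_hasFDerivAt]
    refine hf.congr_fderiv ?_
    ext u
    simp only [ContinuousLinearMap.smul_apply, ContinuousLinearMap.comp_apply,
      ContinuousLinearMap.prod_apply, ContinuousLinearMap.id_apply,
      ContinuousLinearMap.coe_sub', Pi.sub_apply, fderivInnerCLM_apply,
      InnerProductSpace.toDual_apply_apply, smul_eq_mul]
    have h1 : (inner ℝ x (fderiv ℝ D x u) : ℝ) = inner ℝ (D x) u := by
      rw [← hSym, hHom]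
    rw [inner_sub_right, h1, real_inner_smul_left, inner_sub_left,
      inner_sub_right u x (D x), real_inner_comm u x, real_inner_comm u (D x)]
    field_simp
    ring
  exact hgrad.gradient
end

section
/- Let H, H̄ ∈ ℝ^{n×n} be symmetric with H̄ positive definite, ε ∈ (0,1), κ = κ(H̄), and suppose ‖H − H̄‖ ≤ ε‖H̄‖ with εκ < 1/2. Then H is invertible and for any v ∈ ℝⁿ and stationary point x* of a C² function g with L-Lipschitz Hessian H̄ = ∇²g(x), the single exact-Newton-type error satisfies ‖x − H⁻¹∇g(x) − x*‖ ≤ [1/((1−2εκ)λ_min(H̄))] · ( (L/2)‖x − x*‖² + ε λ_max(H̄)‖x − x*‖ ). -/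
open Matrix

/-- Spectral (ℓ²) operator norm of a square real matrix. -/
noncomputable def opNorm {n : ℕ} (M : Matrix (Fin n) (Fin n) ℝ) : ℝ :=
  ‖LinearMap.toContinuousLinearMap (Matrix.toEuclideanLin M)‖

open RealInnerProductSpace

noncomputable def matT {n : ℕ} (M : Matrix (Fin n) (Fin n) ℝ) :
    EuclideanSpace ℝ (Fin n) →L[ℝ] EuclideanSpace ℝ (Fin n) :=
  LinearMap.toContinuousLinearMap (Matrix.toEuclideanLin M)

lemma matT_apply {n : ℕ} (M : Matrix (Fin n) (Fin n) ℝ) (v : EuclideanSpace ℝ (Fin n)) :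
    matT M v = (EuclideanSpace.equiv (Fin n) ℝ).symm (M *ᵥ (EuclideanSpace.equiv (Fin n) ℝ) v) :=
  rfl

lemma matT_basis {n : ℕ} {M : Matrix (Fin n) (Fin n) ℝ} (hM : M.IsHermitian) (i : Fin n) :
    matT M (hM.eigenvectorBasis i) = hM.eigenvalues i • hM.eigenvectorBasis i := by
  ext j
  exact congrFun (hM.mulVec_eigenvectorBasis i) j

lemma repr_matT {n : ℕ} {M : Matrix (Fin n) (Fin n) ℝ} (hM : M.IsHermitian)
    (v : EuclideanSpace ℝ (Fin n)) (i : Fin n) :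
    hM.eigenvectorBasis.repr (matT M v) i =
      hM.eigenvalues i * hM.eigenvectorBasis.repr v i := by
  set b := hM.eigenvectorBasis with hb
  have h1 : matT M v = ∑ j, (b.repr v j * hM.eigenvalues j) • b j := by
    conv_lhs => rw [← b.sum_repr v]
    rw [map_sum]
    refine Finset.sum_congr rfl fun j _ => ?_
    rw [_root_.map_smul, matT_basis hM j, smul_smul]
  rw [h1, map_sum]
  simp only [_root_.map_smul, b.repr_self]
  rw [WithLp.ofLp_sum, Finset.sum_apply]
  simp [EuclideanSpace.single_apply, mul_comm]

lemma inner_matT {n : ℕ} {M : Matrix (Fin n) (Fin n) ℝ} (hM : M.IsHermitian)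
    (v : EuclideanSpace ℝ (Fin n)) :
    (inner ℝ (matT M v) v : ℝ) = ∑ i, hM.eigenvalues i * (hM.eigenvectorBasis.repr v i) ^ 2 := by
  rw [← hM.eigenvectorBasis.repr.inner_map_map (matT M v) v]
  simp only [PiLp.inner_apply, RCLike.inner_apply, starRingEnd_apply, star_trivial,
    repr_matT hM]
  exact Finset.sum_congr rfl fun i _ => by ring

lemma normsq_eq {n : ℕ} {M : Matrix (Fin n) (Fin n) ℝ} (hM : M.IsHermitian)
    (v : EuclideanSpace ℝ (Fin n)) :
    ‖v‖ ^ 2 = ∑ i, (hM.eigenvectorBasis.repr v i) ^ 2 := by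
  rw [← real_inner_self_eq_norm_sq, ← hM.eigenvectorBasis.repr.inner_map_map v v]
  simp only [PiLp.inner_apply, RCLike.inner_apply, starRingEnd_apply, star_trivial]
  exact Finset.sum_congr rfl fun i _ => by ring

lemma normsq_matT {n : ℕ} {M : Matrix (Fin n) (Fin n) ℝ} (hM : M.IsHermitian)
    (v : EuclideanSpace ℝ (Fin n)) :
    ‖matT M v‖ ^ 2 = ∑ i, (hM.eigenvalues i * hM.eigenvectorBasis.repr v i) ^ 2 := by
  rw [normsq_eq hM (matT M v)]
  exact Finset.sum_congr rfl fun i _ => by rw [repr_matT hM]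

lemma norm_matT_le {n : ℕ} {M : Matrix (Fin n) (Fin n) ℝ} (hM : M.IsHermitian)
    {Λ : ℝ} (hΛ : 0 ≤ Λ) (h : ∀ i, |hM.eigenvalues i| ≤ Λ) (v : EuclideanSpace ℝ (Fin n)) :
    ‖matT M v‖ ≤ Λ * ‖v‖ := by
  have h2 : ‖matT M v‖ ^ 2 ≤ (Λ * ‖v‖) ^ 2 := by
    rw [normsq_matT hM, mul_pow, normsq_eq hM v, Finset.mul_sum]
    refine Finset.sum_le_sum fun i _ => ?_
    have h3 : (hM.eigenvalues i) ^ 2 ≤ Λ ^ 2 := by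
      have := h i; nlinarith [abs_nonneg (hM.eigenvalues i), sq_abs (hM.eigenvalues i)]
    nlinarith [sq_nonneg (hM.eigenvectorBasis.repr v i)]
  have := norm_nonneg (matT M v)
  nlinarith [mul_nonneg hΛ (norm_nonneg v)]

lemma rayleigh_lower {n : ℕ} {M : Matrix (Fin n) (Fin n) ℝ} (hM : M.IsHermitian)
    {lb : ℝ} (h : ∀ i, lb ≤ hM.eigenvalues i) (v : EuclideanSpace ℝ (Fin n)) :
    lb * ‖v‖ ^ 2 ≤ (inner ℝ (matT M v) v : ℝ) := by
  rw [inner_matT hM, normsq_eq hM v, Finset.mul_sum]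
  exact Finset.sum_le_sum fun i _ =>
    mul_le_mul_of_nonneg_right (h i) (sq_nonneg _)

lemma taylor_bound {n : ℕ} (g : EuclideanSpace ℝ (Fin n) → ℝ) (hg : ContDiff ℝ 2 g) (L : ℝ)
    (hL : ∀ w z, ‖fderiv ℝ (gradient g) w - fderiv ℝ (gradient g) z‖ ≤ L * ‖w - z‖)
    (x xs : EuclideanSpace ℝ (Fin n)) (hxs : gradient g xs = 0) :
    ‖fderiv ℝ (gradient g) x (x - xs) - gradient g x‖ ≤ (L / 2) * ‖x - xs‖ ^ 2 := by
  have hgrad : ContDiff ℝ 1 (gradient g) := by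
    have h1 : ContDiff ℝ 1 (fderiv ℝ g) := hg.fderiv_right (by norm_num)
    have h0 : gradient g = fun y => (InnerProductSpace.toDual ℝ _).symm (fderiv ℝ g y) := rfl
    rw [h0]
    exact (InnerProductSpace.toDual ℝ _).symm.contDiff.comp h1
  have hdiff : ∀ y, HasFDerivAt (gradient g) (fderiv ℝ (gradient g) y) y := fun y =>
    (hgrad.differentiable one_ne_zero y).hasFDerivAt
  set d := xs - x with hd
  set w := fderiv ℝ (gradient g) x d with hw
  set φ : ℝ → EuclideanSpace ℝ (Fin n) :=
    fun t => gradient g (x + t • d) - t • w - gradient g x with hφ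
  have hline : ∀ t : ℝ, HasDerivAt (fun s : ℝ => x + s • d) d t := fun t => by
    simpa using ((hasDerivAt_id t).smul_const d).const_add x
  have hφ' : ∀ t : ℝ,
      HasDerivAt φ (fderiv ℝ (gradient g) (x + t • d) d - w) t := fun t => by
    have h1 : HasDerivAt (fun s : ℝ => gradient g (x + s • d))
        (fderiv ℝ (gradient g) (x + t • d) d) t :=
      (hdiff _).comp_hasDerivAt t (hline t)
    have h2 : HasDerivAt (fun s : ℝ => s • w) w t := by
      simpa using (hasDerivAt_id t).smul_const w
    exact (h1.sub h2).sub_const (gradient g x)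
  have key : ∀ t ∈ Set.Icc (0:ℝ) 1, ‖φ t‖ ≤ L * ‖d‖ ^ 2 / 2 * t ^ 2 := by
    intro t ht
    refine image_norm_le_of_norm_deriv_right_le_deriv_boundary
      (f' := fun t => fderiv ℝ (gradient g) (x + t • d) d - w)
      (B := fun t => L * ‖d‖ ^ 2 / 2 * t ^ 2) (B' := fun t => L * ‖d‖ ^ 2 * t)
      (fun s _ => (hφ' s).continuousAt.continuousWithinAt)
      (fun s _ => (hφ' s).hasDerivWithinAt)
      (by simp [hφ]) (fun s => by
        have := (hasDerivAt_pow 2 s).const_mul (L * ‖d‖ ^ 2 / 2)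
        exact this.congr_deriv (by ring))
      (fun s hs => ?_) ht
    have h3 : fderiv ℝ (gradient g) (x + s • d) d - w =
        (fderiv ℝ (gradient g) (x + s • d) - fderiv ℝ (gradient g) x) d := by
      rw [ContinuousLinearMap.sub_apply]
    show ‖fderiv ℝ (gradient g) (x + s • d) d - w‖ ≤ L * ‖d‖ ^ 2 * s
    rw [h3]
    calc ‖(fderiv ℝ (gradient g) (x + s • d) - fderiv ℝ (gradient g) x) d‖
        ≤ ‖fderiv ℝ (gradient g) (x + s • d) - fderiv ℝ (gradient g) x‖ * ‖d‖ :=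
          ContinuousLinearMap.le_opNorm _ _
      _ ≤ (L * ‖(x + s • d) - x‖) * ‖d‖ :=
          mul_le_mul_of_nonneg_right (hL _ _) (norm_nonneg d)
      _ = L * ‖d‖ ^ 2 * s := by
          rw [add_sub_cancel_left, norm_smul, Real.norm_eq_abs, abs_of_nonneg hs.1]
          ring
  have h1 := key 1 (by norm_num)
  have hφ1 : φ 1 = -w - gradient g x := by
    simp [hφ, hd, hxs]
  have hgoal : fderiv ℝ (gradient g) x (x - xs) - gradient g x = φ 1 := by
    rw [hφ1, hw]
    have : (x - xs) = -d := by rw [hd]; abel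
    rw [this, map_neg]
  rw [hgoal]
  calc ‖φ 1‖ ≤ L * ‖d‖ ^ 2 / 2 * 1 ^ 2 := h1
    _ = (L / 2) * ‖x - xs‖ ^ 2 := by rw [hd, norm_sub_rev]; ring

set_option maxHeartbeats 1000000 in
/-- Exact Newton-type step with a sketched Hessian `H` approximating `H̄ = ∇²g(x)`:
if `‖H − H̄‖ ≤ ε‖H̄‖` and `2εκ(H̄) < 1`, then `H` is invertible and
`‖x − H⁻¹∇g(x) − x*‖ ≤ [1/((1−2εκ)λ_min(H̄))]((L/2)‖x−x*‖² + ελ_max(H̄)‖x−x*‖)`. -/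
theorem stmt18 {n : ℕ} (hn : 0 < n)
    (g : EuclideanSpace ℝ (Fin n) → ℝ) (hg : ContDiff ℝ 2 g) (L : ℝ)
    (hL : ∀ w z, ‖fderiv ℝ (gradient g) w - fderiv ℝ (gradient g) z‖ ≤ L * ‖w - z‖)
    (x xs : EuclideanSpace ℝ (Fin n)) (hxs : gradient g xs = 0)
    (H Hb : Matrix (Fin n) (Fin n) ℝ) (hHsym : H.IsHermitian) (hHb : Hb.PosDef)
    (hHess : ∀ v : EuclideanSpace ℝ (Fin n),
      fderiv ℝ (gradient g) x v =
        (EuclideanSpace.equiv (Fin n) ℝ).symm (Hb *ᵥ (EuclideanSpace.equiv (Fin n) ℝ) v))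
    (ε : ℝ) (hε : 0 < ε) (hε1 : ε < 1)
    (hsk : opNorm (H - Hb) ≤ ε * opNorm Hb)
    (hκ : 2 * ε * ((⨆ i, hHb.1.eigenvalues i) / (⨅ i, hHb.1.eigenvalues i)) < 1) :
    IsUnit H.det ∧
    ‖x - (EuclideanSpace.equiv (Fin n) ℝ).symm
          (H⁻¹ *ᵥ (EuclideanSpace.equiv (Fin n) ℝ) (gradient g x)) - xs‖ ≤
      (1 / ((1 - 2 * ε * ((⨆ i, hHb.1.eigenvalues i) / (⨅ i, hHb.1.eigenvalues i))) *
          (⨅ i, hHb.1.eigenvalues i))) *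
        ((L / 2) * ‖x - xs‖ ^ 2 + ε * (⨆ i, hHb.1.eigenvalues i) * ‖x - xs‖) := by
  haveI : Nonempty (Fin n) := ⟨⟨0, hn⟩⟩
  set lmin := ⨅ i, hHb.1.eigenvalues i with hlmin
  set lmax := ⨆ i, hHb.1.eigenvalues i with hlmax
  have heigpos : ∀ i, 0 < hHb.1.eigenvalues i := fun i => hHb.eigenvalues_pos i
  have hminle : ∀ i, lmin ≤ hHb.1.eigenvalues i := fun i =>
    ciInf_le (Set.Finite.bddBelow (Set.finite_range _)) i
  have hlemax : ∀ i, hHb.1.eigenvalues i ≤ lmax := fun i =>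
    le_ciSup (Set.Finite.bddAbove (Set.finite_range _)) i
  have hminpos : 0 < lmin := by
    have hmem : sInf (Set.range hHb.1.eigenvalues) ∈ Set.range hHb.1.eigenvalues :=
      Set.Nonempty.csInf_mem (Set.range_nonempty _) (Set.finite_range _)
    obtain ⟨j, hj⟩ := hmem
    rw [hlmin, iInf, ← hj]
    exact heigpos j
  have hmaxpos : 0 < lmax :=
    lt_of_lt_of_le hminpos (le_trans (hminle ⟨0, hn⟩) (hlemax ⟨0, hn⟩))
  set c := (1 - 2 * ε * (lmax / lmin)) * lmin with hc
  have hfrac : 0 < 1 - 2 * ε * (lmax / lmin) := by linarith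
  have hcpos : 0 < c := mul_pos hfrac hminpos
  have hceq : c = lmin - 2 * ε * lmax := by
    rw [hc]; field_simp
  have hopHb : ‖matT Hb‖ ≤ lmax :=
    ContinuousLinearMap.opNorm_le_bound _ hmaxpos.le
      (norm_matT_le hHb.1 hmaxpos.le
        (fun i => by rw [abs_of_pos (heigpos i)]; exact hlemax i))
  have hopE : ‖matT (H - Hb)‖ ≤ ε * lmax := by
    have h0 : opNorm (H - Hb) = ‖matT (H - Hb)‖ := rfl
    have h1 : opNorm Hb = ‖matT Hb‖ := rfl
    rw [h0, h1] at hsk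
    exact le_trans hsk (mul_le_mul_of_nonneg_left hopHb hε.le)
  have hsub : ∀ v, matT (H - Hb) v = matT H v - matT Hb v := fun v => by
    simp [matT, map_sub]
  have hray : ∀ v : EuclideanSpace ℝ (Fin n),
      c * ‖v‖ ^ 2 ≤ (inner ℝ (matT H v) v : ℝ) := by
    intro v
    have hsplit : matT H v = matT Hb v + matT (H - Hb) v := by
      rw [hsub]; abel
    rw [hsplit, inner_add_left]
    have h1 : lmin * ‖v‖ ^ 2 ≤ (inner ℝ (matT Hb v) v : ℝ) :=
      rayleigh_lower hHb.1 hminle v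
    have h2 : |(inner ℝ (matT (H - Hb) v) v : ℝ)| ≤ (ε * lmax) * ‖v‖ ^ 2 := by
      calc |(inner ℝ (matT (H - Hb) v) v : ℝ)| ≤ ‖matT (H - Hb) v‖ * ‖v‖ :=
            abs_real_inner_le_norm _ _
        _ ≤ (‖matT (H - Hb)‖ * ‖v‖) * ‖v‖ :=
            mul_le_mul_of_nonneg_right (ContinuousLinearMap.le_opNorm _ _) (norm_nonneg v)
        _ ≤ (ε * lmax) * ‖v‖ ^ 2 := by
            nlinarith [norm_nonneg v, ContinuousLinearMap.opNorm_nonneg (matT (H - Hb))]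
    have h2' := (abs_le.mp h2).1
    have h3 : 0 ≤ ε * lmax * ‖v‖ ^ 2 :=
      mul_nonneg (mul_nonneg hε.le hmaxpos.le) (sq_nonneg _)
    nlinarith [sq_nonneg ‖v‖]
  have hlow : ∀ v : EuclideanSpace ℝ (Fin n), c * ‖v‖ ≤ ‖matT H v‖ := by
    intro v
    rcases eq_or_ne v 0 with rfl | hne
    · simp
    · have h1 := hray v
      have h2 : (inner ℝ (matT H v) v : ℝ) ≤ ‖matT H v‖ * ‖v‖ := real_inner_le_norm _ _
      have hv : 0 < ‖v‖ := norm_pos_iff.mpr hne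
      nlinarith
  have hdet : IsUnit H.det := by
    rw [isUnit_iff_ne_zero]
    intro h0
    obtain ⟨v, hv0, hv⟩ := Matrix.exists_mulVec_eq_zero_iff.mpr h0
    set u : EuclideanSpace ℝ (Fin n) := (EuclideanSpace.equiv (Fin n) ℝ).symm v with hu
    have hu0 : u ≠ 0 := by
      intro h
      apply hv0
      have := congrArg (EuclideanSpace.equiv (Fin n) ℝ) h
      simpa [hu] using this
    have hTu : matT H u = 0 := by
      rw [matT_apply, hu]
      simp [hv, PiLp.coe_continuousLinearEquiv]
    have hl := hlow u
    rw [hTu] at hl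
    simp only [norm_zero] at hl
    have hupos : 0 < ‖u‖ := norm_pos_iff.mpr hu0
    nlinarith
  have hinv : ∀ z : EuclideanSpace ℝ (Fin n), ‖matT H⁻¹ z‖ ≤ (1 / c) * ‖z‖ := by
    intro z
    have hcomp : matT H (matT H⁻¹ z) = z := by
      rw [matT_apply, matT_apply]
      simp [mulVec_mulVec, Matrix.mul_nonsing_inv H hdet, PiLp.coe_continuousLinearEquiv]
    have hl := hlow (matT H⁻¹ z)
    rw [hcomp] at hl
    rw [one_div, inv_mul_eq_div, le_div_iff₀ hcpos]
    linarith [hl]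
  refine ⟨hdet, ?_⟩
  have hessT : ∀ v, fderiv ℝ (gradient g) x v = matT Hb v := fun v => hHess v
  have htay := taylor_bound g hg L hL x xs hxs
  rw [hessT] at htay
  have herr : x - (EuclideanSpace.equiv (Fin n) ℝ).symm
      (H⁻¹ *ᵥ (EuclideanSpace.equiv (Fin n) ℝ) (gradient g x)) - xs =
      matT H⁻¹ (matT H (x - xs) - gradient g x) := by
    rw [map_sub]
    have h1 : matT H⁻¹ (matT H (x - xs)) = x - xs := by
      rw [matT_apply, matT_apply]
      simp [mulVec_mulVec, Matrix.nonsing_inv_mul H hdet, PiLp.coe_continuousLinearEquiv]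
    rw [h1, matT_apply]
    abel
  rw [herr]
  have hnum : ‖matT H (x - xs) - gradient g x‖ ≤
      (L / 2) * ‖x - xs‖ ^ 2 + ε * lmax * ‖x - xs‖ := by
    have hsplit : matT H (x - xs) - gradient g x =
        matT (H - Hb) (x - xs) + (matT Hb (x - xs) - gradient g x) := by
      rw [hsub]; abel
    rw [hsplit]
    have h1 : ‖matT (H - Hb) (x - xs)‖ ≤ (ε * lmax) * ‖x - xs‖ :=
      le_trans (ContinuousLinearMap.le_opNorm _ _)
        (mul_le_mul_of_nonneg_right hopE (norm_nonneg _))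
    calc ‖matT (H - Hb) (x - xs) + (matT Hb (x - xs) - gradient g x)‖
        ≤ ‖matT (H - Hb) (x - xs)‖ + ‖matT Hb (x - xs) - gradient g x‖ := norm_add_le _ _
      _ ≤ (L / 2) * ‖x - xs‖ ^ 2 + ε * lmax * ‖x - xs‖ := by linarith
  calc ‖matT H⁻¹ (matT H (x - xs) - gradient g x)‖
      ≤ (1 / c) * ‖matT H (x - xs) - gradient g x‖ := hinv _
    _ ≤ (1 / c) * ((L / 2) * ‖x - xs‖ ^ 2 + ε * lmax * ‖x - xs‖) :=
        mul_le_mul_of_nonneg_left hnum (by positivity)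
end
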